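/- Let ω > 0, T > 0, c > 0, (x₀, ẋ₀) ∈ ℝ² and L ∈ ℝ, and let (x₀', ẋ₀') = A(ω,T)·(x₀, ẋ₀)ᵀ + b·L be the next footstep initial state. Then |A₁₁x₀' + A₁₂ẋ₀'| < c if and only if L lies in the open interval ((2A₁₁ − 1/A₁₁)x₀ + 2A₁₂ẋ₀ − c/A₁₁, (2A₁₁ − 1/A₁₁)x₀ + 2A₁₂ẋ₀ + c/A₁₁). -/

import Mathlib

/-- the next footstep initial state
`(x₀', v₀') = A(ω,T)·(x₀,v₀) + b·L` satisfies `|A₁₁x₀' + A₁₂v₀'| < c` iff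
`L ∈ ((2A₁₁ − 1/A₁₁)x₀ + 2A₁₂v₀ − c/A₁₁, (2A₁₁ − 1/A₁₁)x₀ + 2A₁₂v₀ + c/A₁₁)`. -/
theorem stmt9 (ω T c x₀ v₀ L : ℝ) (hω : 0 < ω) (hT : 0 < T) (hc : 0 < c)
    (A11 A12 A21 A22 : ℝ)
    (hA11 : A11 = Real.cosh (ω * T)) (hA12 : A12 = Real.sinh (ω * T) / ω)
    (hA21 : A21 = ω * Real.sinh (ω * T)) (hA22 : A22 = Real.cosh (ω * T))
    (x₀' v₀' : ℝ)
    (hx' : x₀' = A11 * x₀ + A12 * v₀ - L)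
    (hv' : v₀' = A21 * x₀ + A22 * v₀) :
    |A11 * x₀' + A12 * v₀'| < c ↔
      L ∈ Set.Ioo ((2 * A11 - 1 / A11) * x₀ + 2 * A12 * v₀ - c / A11)
                  ((2 * A11 - 1 / A11) * x₀ + 2 * A12 * v₀ + c / A11) := by
  have hA11pos : 0 < A11 := hA11 ▸ Real.cosh_pos _
  set K : ℝ := (2 * A11 - 1 / A11) * x₀ + 2 * A12 * v₀ with hK
  have hE : A11 * x₀' + A12 * v₀' = A11 * (K - L) := by
    rw [hK, hx', hv']
    have hch : Real.cosh (ω * T) ≠ 0 := ne_of_gt (Real.cosh_pos _)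
    have hid : Real.cosh (ω * T) ^ 2 - Real.sinh (ω * T) ^ 2 = 1 :=
      Real.cosh_sq_sub_sinh_sq _
    subst hA11 hA12 hA21 hA22
    field_simp
    linear_combination (-(ω * x₀)) * hid
  rw [hE, Set.mem_Ioo, abs_lt]
  constructor
  · rintro ⟨h1, h2⟩
    refine ⟨?_, ?_⟩
    · rw [sub_lt_iff_lt_add, ← sub_lt_iff_lt_add', lt_div_iff₀ hA11pos]
      nlinarith
    · rw [← sub_lt_iff_lt_add', lt_div_iff₀ hA11pos]
      nlinarith
  · rintro ⟨h1, h2⟩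
    have h1' : (K - L) * A11 < c := by
      rw [← lt_div_iff₀ hA11pos]; linarith
    have h2' : (L - K) * A11 < c := by
      rw [← lt_div_iff₀ hA11pos]; linarith
    constructor <;> nlinarith
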